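/- Comparison of λ̃ with the eigenvalues of a rank-two Ω. Let Ω = λ₁ξ₁ξ₁′ + λ₂ξ₂ξ₂′ with ξ₁, ξ₂ orthonormal, λ₁ ≥ λ₂, λ₁ > 0, λ₂ ≠ 0, and assume v₀ = λ₁⟨ξ₁,1_n⟩² + λ₂⟨ξ₂,1_n⟩² > 0 and ⟨ξ₁,1_n⟩² + ⟨ξ₂,1_n⟩² > 0. Let λ̃ = λ₁λ₂(⟨ξ₁,1_n⟩² + ⟨ξ₂,1_n⟩²)/v₀ be the nonzero eigenvalue of Ω̃ = Ω − v₀^{-1}Ω1_n1_n′Ω. Then: (i) if λ₂ > 0, then λ₂ ≤ λ̃ ≤ λ₁; (ii) if λ₂ < 0, then |λ̃| ≥ |λ₂|. -/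
import Mathlib


/-- Comparison of the eigenvalue `λ̃` of the centered matrix with the
eigenvalues `λ₁ ≥ λ₂` of the rank-two matrix `Ω = λ₁ξ₁ξ₁' + λ₂ξ₂ξ₂'`:
if `λ₂ > 0` then `λ₂ ≤ λ̃ ≤ λ₁`, and if `λ₂ < 0` then `|λ₂| ≤ |λ̃|`. -/
theorem centered_eigenvalue_comparison
    (n : ℕ) (ξ₁ ξ₂ : Fin n → ℝ)
    (hξ₁ : ∑ i, (ξ₁ i) ^ 2 = 1) (hξ₂ : ∑ i, (ξ₂ i) ^ 2 = 1)
    (horth : ∑ i, ξ₁ i * ξ₂ i = 0)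
    (lam₁ lam₂ : ℝ) (hord : lam₂ ≤ lam₁) (hlam₁ : 0 < lam₁) (hlam₂ : lam₂ ≠ 0)
    (Ω : Fin n → Fin n → ℝ)
    (hΩ : ∀ i j, Ω i j = lam₁ * ξ₁ i * ξ₁ j + lam₂ * ξ₂ i * ξ₂ j)
    (s₁ s₂ : ℝ) (hs₁ : s₁ = ∑ i, ξ₁ i) (hs₂ : s₂ = ∑ i, ξ₂ i)
    (v₀ : ℝ) (hv₀ : v₀ = lam₁ * s₁ ^ 2 + lam₂ * s₂ ^ 2) (hv₀pos : 0 < v₀)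
    (hs : 0 < s₁ ^ 2 + s₂ ^ 2)
    (lamt : ℝ)
    (hlamt : lamt = lam₁ * lam₂ * (s₁ ^ 2 + s₂ ^ 2) / v₀) :
    (0 < lam₂ → lam₂ ≤ lamt ∧ lamt ≤ lam₁) ∧
    (lam₂ < 0 → |lam₂| ≤ |lamt|) := by
  constructor
  · intro h2
    constructor
    · rw [hlamt, le_div_iff₀ hv₀pos, hv₀]
      nlinarith [mul_nonneg (mul_nonneg h2.le (sub_nonneg.2 hord)) (sq_nonneg s₂)]
    · rw [hlamt, div_le_iff₀ hv₀pos, hv₀]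
      nlinarith [mul_nonneg (mul_nonneg hlam₁.le (sub_nonneg.2 hord)) (sq_nonneg s₁)]
  · intro h2
    have hlt : lamt < 0 := by
      rw [hlamt]
      apply div_neg_of_neg_of_pos _ hv₀pos
      nlinarith [mul_pos hlam₁ hs]
    rw [abs_of_neg h2, abs_of_neg hlt, neg_le_neg_iff, hlamt, div_le_iff₀ hv₀pos, hv₀]
    nlinarith [mul_nonneg (mul_nonneg (neg_nonneg.2 h2.le) (sub_nonneg.2 hord)) (sq_nonneg s₂)]
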